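/- Let r, v ∈ S^2, α > 0, θ ∈ (0, π/2), and define B(R) = 1 − (1/α) ln((cos θ − r^T R^T v)/(1 + cos θ)) on the set where r^T R^T v < cos θ. For a variation δR = R η̂ with η ∈ R^3, the directional derivative of B at R equals η · e_{R_B}, where e_{R_B} = ((R^T v) × r)/(α (r^T R^T v − cos θ)). -/

import Mathlib

open Matrix

noncomputable section

/-- The hat map sending `x ∈ ℝ³` to the skew-symmetric matrix `x̂` with `x̂ y = x × y`. -/
def hat (x : Fin 3 → ℝ) : Matrix (Fin 3) (Fin 3) ℝ :=
  !![0, -x 2, x 1; x 2, 0, -x 0; -x 1, x 0, 0]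

/-- The vee map, inverse of the hat map on skew-symmetric matrices. -/
def vee (A : Matrix (Fin 3) (Fin 3) ℝ) : Fin 3 → ℝ :=
  ![A 2 1, A 0 2, A 1 0]

attribute [local instance] Matrix.linftyOpNormedRing Matrix.linftyOpNormedAlgebra

theorem dirDeriv_barrier (r v : Fin 3 → ℝ) (hr : r ⬝ᵥ r = 1) (hv : v ⬝ᵥ v = 1)
    (α θ : ℝ) (hα : 0 < α) (hθ : θ ∈ Set.Ioo 0 (Real.pi / 2))
    (R : Matrix (Fin 3) (Fin 3) ℝ) (hR : Rᵀ * R = 1) (hRdet : R.det = 1)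
    (hcon : r ⬝ᵥ (Rᵀ *ᵥ v) < Real.cos θ) (η : Fin 3 → ℝ) :
    HasDerivAt
      (fun ε : ℝ => 1 - (1 / α) * Real.log
        ((Real.cos θ - r ⬝ᵥ ((R * NormedSpace.exp (ε • hat η))ᵀ *ᵥ v)) / (1 + Real.cos θ)))
      (η ⬝ᵥ ((1 / (α * (r ⬝ᵥ (Rᵀ *ᵥ v) - Real.cos θ))) • crossProduct (Rᵀ *ᵥ v) r)) 0 := by
  set c := Real.cos θ with hc
  set w := Rᵀ *ᵥ v with hw
  set A := hat η with hA
  have hcpos : 0 < c := Real.cos_pos_of_mem_Ioo ⟨by linarith [hθ.1, Real.pi_pos], hθ.2⟩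
  have h1c : (0:ℝ) < 1 + c := by linarith
  have hb : 0 < c - r ⬝ᵥ w := by linarith
  -- derivative of the matrix exponential
  have hE : HasDerivAt (fun ε : ℝ => NormedSpace.exp (ε • A)) A 0 := by
    have := hasDerivAt_exp_smul_const (𝕂 := ℝ) A 0
    simp only [zero_smul, NormedSpace.exp_zero, one_mul, mul_one] at this
    exact this
  -- the linear functional M ↦ w ⬝ᵥ (M *ᵥ r)
  let L : Matrix (Fin 3) (Fin 3) ℝ →L[ℝ] ℝ :=
    LinearMap.toContinuousLinearMap
      { toFun := fun M => w ⬝ᵥ (M *ᵥ r)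
        map_add' := fun M N => by
          show w ⬝ᵥ ((M + N) *ᵥ r) = w ⬝ᵥ (M *ᵥ r) + w ⬝ᵥ (N *ᵥ r)
          rw [add_mulVec, dotProduct_add]
        map_smul' := fun t M => by
          show w ⬝ᵥ ((t • M) *ᵥ r) = t • (w ⬝ᵥ (M *ᵥ r))
          rw [smul_mulVec, dotProduct_smul] }
  have hL : ∀ M : Matrix (Fin 3) (Fin 3) ℝ, L M = w ⬝ᵥ (M *ᵥ r) := fun _ => rfl
  have hf : HasDerivAt (fun ε : ℝ => w ⬝ᵥ (NormedSpace.exp (ε • A) *ᵥ r))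
      (w ⬝ᵥ (A *ᵥ r)) 0 := by
    have := L.hasFDerivAt.comp_hasDerivAt 0 hE
    simp only [Function.comp_def, hL] at this
    exact this
  -- rewrite the dot product
  have key : ∀ M : Matrix (Fin 3) (Fin 3) ℝ, r ⬝ᵥ ((R * M)ᵀ *ᵥ v) = w ⬝ᵥ (M *ᵥ r) := by
    intro M
    rw [transpose_mul, ← mulVec_mulVec, dotProduct_mulVec, vecMul_transpose,
      dotProduct_comm, hw]
  have hE0 : NormedSpace.exp ((0:ℝ) • A) = 1 := by simp [NormedSpace.exp_zero]
  have hinner : HasDerivAt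
      (fun ε : ℝ => (c - w ⬝ᵥ (NormedSpace.exp (ε • A) *ᵥ r)) / (1 + c))
      ((0 - w ⬝ᵥ (A *ᵥ r)) / (1 + c)) 0 :=
    ((hasDerivAt_const 0 c).sub hf).div_const _
  have hne : (c - w ⬝ᵥ (NormedSpace.exp ((0:ℝ) • A) *ᵥ r)) / (1 + c) ≠ 0 := by
    rw [zero_smul, NormedSpace.exp_zero, one_mulVec, dotProduct_comm w r]
    exact ne_of_gt (div_pos hb h1c)
  have hlog := hinner.log hne
  have hfinal := (hasDerivAt_const (0:ℝ) (1:ℝ)).sub (hlog.const_mul (1 / α))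
  simp only [zero_smul, NormedSpace.exp_zero, one_mulVec, dotProduct_comm w r] at hfinal
  replace hfinal : HasDerivAt ((fun _ : ℝ => (1:ℝ)) - fun y => 1 / α * Real.log
      ((c - w ⬝ᵥ (NormedSpace.exp (y • A) *ᵥ r)) / (1 + c)))
      (0 - 1 / α * ((0 - w ⬝ᵥ (A *ᵥ r)) / (1 + c) / ((c - r ⬝ᵥ w) / (1 + c)))) 0 := hfinal
  convert hfinal using 2 with ε
  · rw [key]
    rfl
  · have hα' : α ≠ 0 := ne_of_gt hα
    have hb' : c - r ⬝ᵥ w ≠ 0 := ne_of_gt hb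
    have h1c' : (1:ℝ) + c ≠ 0 := ne_of_gt h1c
    have htriple : w ⬝ᵥ (A *ᵥ r) = -(η ⬝ᵥ crossProduct w r) := by
      simp [hA, hat, crossProduct, dotProduct, mulVec, Fin.sum_univ_three]
      ring
    rw [htriple, div_div_div_cancel_right₀ h1c', dotProduct_smul, smul_eq_mul]
    generalize η ⬝ᵥ crossProduct w r = T
    have h1 : r ⬝ᵥ w - c = -(c - r ⬝ᵥ w) := by ring
    rw [h1]
    generalize hδ : c - r ⬝ᵥ w = δ at hb'
    field_simp
    ring
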